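/- With K, (P_m), (Q_n), F, z₀ and E as in the context: the map E : ℝ₊² → P(K) is increasing, i.e., for every (s,t) ∈ ℝ₊² and every (s₀,t₀) ∈ ℝ₊², E_{(s,t)} ≤ E_{(s+s₀, t+t₀)} (as projections: the range of E_{(s,t)} is contained in the range of E_{(s+s₀,t+t₀)}). -/
import Mathlib


open MeasureTheory

noncomputable section

/-- The increasing family `F : ℤ² → P(K)` built from the mutually orthogonal projections
`(P_m)_{m ≥ 1}` and `(Q_n)_{n ≥ 1}`. -/
def Fproj {K : Type*} [NormedAddCommGroup K] [InnerProductSpace ℂ K] [CompleteSpace K]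
    (Pm Qn : ℕ → K →L[ℂ] K) : ℤ × ℤ → K →L[ℂ] K := fun q =>
  if 1 ≤ q.1 ∧ q.2 = 0 then ∑ k ∈ Finset.Icc 1 q.1.toNat, Pm k
  else if q.1 = 0 ∧ 1 ≤ q.2 then ∑ k ∈ Finset.Icc 1 q.2.toNat, Qn k
  else if 1 ≤ q.1 ∧ 1 ≤ q.2 then 1
  else 0

/-- The projection-valued map `E : ℝ₊² → P(K)` of the construction (extended by `0` off
`ℝ₊²`), where `e S = 1_S(z₀)` denotes the value of the fixed character `z₀` of
`L^∞([0,1]², λ)` on the indicator of `S`. -/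
def Eproj {K : Type*} [NormedAddCommGroup K] [InnerProductSpace ℂ K] [CompleteSpace K]
    (Pm Qn : ℕ → K →L[ℂ] K) (e : Set (ℝ × ℝ) → ℂ) : ℝ × ℝ → K →L[ℂ] K := fun q =>
  if 0 ≤ q.1 ∧ 0 ≤ q.2 then
    e (Set.Icc 0 ((⌊q.1⌋ : ℝ) + 1 - q.1) ×ˢ Set.Icc 0 ((⌊q.2⌋ : ℝ) + 1 - q.2)) •
        Fproj Pm Qn (⌊q.1⌋, ⌊q.2⌋) +
    e (Set.Icc 0 ((⌊q.1⌋ : ℝ) + 1 - q.1) ×ˢ Set.Icc ((⌊q.2⌋ : ℝ) + 1 - q.2) 1) •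
        Fproj Pm Qn (⌊q.1⌋, ⌊q.2⌋ + 1) +
    e (Set.Icc ((⌊q.1⌋ : ℝ) + 1 - q.1) 1 ×ˢ Set.Icc 0 ((⌊q.2⌋ : ℝ) + 1 - q.2)) •
        Fproj Pm Qn (⌊q.1⌋ + 1, ⌊q.2⌋) +
    e (Set.Icc ((⌊q.1⌋ : ℝ) + 1 - q.1) 1 ×ˢ Set.Icc ((⌊q.2⌋ : ℝ) + 1 - q.2) 1) •
        Fproj Pm Qn (⌊q.1⌋ + 1, ⌊q.2⌋ + 1)
  else 0

section Helpers

variable {K : Type*} [NormedAddCommGroup K] [InnerProductSpace ℂ K] [CompleteSpace K]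
  (Pm Qn : ℕ → K →L[ℂ] K)

lemma Fproj_zero : Fproj Pm Qn (0, 0) = 0 := by
  simp [Fproj]

lemma Fproj_P {m : ℤ} (h : 1 ≤ m) :
    Fproj Pm Qn (m, 0) = ∑ k ∈ Finset.Icc 1 m.toNat, Pm k := by
  simp [Fproj, h]

lemma Fproj_Q {n : ℤ} (h : 1 ≤ n) :
    Fproj Pm Qn (0, n) = ∑ k ∈ Finset.Icc 1 n.toNat, Qn k := by
  have : ¬ (1 ≤ (0:ℤ)) := by omega
  simp [Fproj, h, this]

lemma Fproj_one {m n : ℤ} (hm : 1 ≤ m) (hn : 1 ≤ n) :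
    Fproj Pm Qn (m, n) = 1 := by
  have h1 : n ≠ 0 := by omega
  have h2 : m ≠ 0 := by omega
  simp [Fproj, hm, hn, h1, h2]

lemma sumcomp {P : ℕ → K →L[ℂ] K}
    (hPP : ∀ i j, 1 ≤ i → 1 ≤ j → P i ∘L P j = if i = j then P i else 0)
    {M M' : ℕ} (h : M ≤ M') :
    (∑ k ∈ Finset.Icc 1 M', P k) ∘L (∑ j ∈ Finset.Icc 1 M, P j)
      = ∑ j ∈ Finset.Icc 1 M, P j := by
  have key : (∑ k ∈ Finset.Icc 1 M', P k) * (∑ j ∈ Finset.Icc 1 M, P j)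
      = ∑ j ∈ Finset.Icc 1 M, P j := by
    rw [Finset.sum_mul_sum, Finset.sum_comm]
    refine Finset.sum_congr rfl fun j hj => ?_
    rw [Finset.mem_Icc] at hj
    have h1 : ∀ k ∈ Finset.Icc 1 M', P k * P j = if k = j then P j else 0 := by
      intro k hk
      rw [Finset.mem_Icc] at hk
      have hkj := hPP k j hk.1 hj.1
      rw [ContinuousLinearMap.mul_def, hkj]
      split <;> simp_all
    rw [Finset.sum_congr rfl h1, Finset.sum_ite_eq' (Finset.Icc 1 M') j (fun _ => P j),
      if_pos (by rw [Finset.mem_Icc]; omega)]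
  exact key

lemma Fcomp
    (hPP : ∀ i j, 1 ≤ i → 1 ≤ j → Pm i ∘L Pm j = if i = j then Pm i else 0)
    (hQQ : ∀ i j, 1 ≤ i → 1 ≤ j → Qn i ∘L Qn j = if i = j then Qn i else 0)
    {m n m' n' : ℤ} (hm : 0 ≤ m) (hn : 0 ≤ n) (hmm : m ≤ m') (hnn : n ≤ n') :
    Fproj Pm Qn (m', n') ∘L Fproj Pm Qn (m, n) = Fproj Pm Qn (m, n) := by
  rcases (by omega : m = 0 ∨ 1 ≤ m) with hm1 | hm1 <;>
    rcases (by omega : n = 0 ∨ 1 ≤ n) with hn1 | hn1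
  · subst hm1; subst hn1
    rw [Fproj_zero]
    exact ContinuousLinearMap.comp_zero _
  · subst hm1
    rcases (by omega : m' = 0 ∨ 1 ≤ m') with hm'1 | hm'1
    · subst hm'1
      have hn'1 : 1 ≤ n' := le_trans hn1 hnn
      rw [Fproj_Q Pm Qn hn1, Fproj_Q Pm Qn hn'1]
      exact sumcomp hQQ (by omega)
    · have hn'1 : 1 ≤ n' := le_trans hn1 hnn
      rw [Fproj_one Pm Qn hm'1 hn'1]
      exact one_mul _
  · subst hn1
    rcases (by omega : n' = 0 ∨ 1 ≤ n') with hn'1 | hn'1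
    · subst hn'1
      have hm'1 : 1 ≤ m' := le_trans hm1 hmm
      rw [Fproj_P Pm Qn hm1, Fproj_P Pm Qn hm'1]
      exact sumcomp hPP (by omega)
    · have hm'1 : 1 ≤ m' := le_trans hm1 hmm
      rw [Fproj_one Pm Qn hm'1 hn'1]
      exact one_mul _
  · rw [Fproj_one Pm Qn (le_trans hm1 hmm) (le_trans hn1 hnn)]
    exact one_mul _

end Helpers

/-- The map `E : ℝ₊² → P(K)` is increasing: for `(s,t), (s₀,t₀) ∈ ℝ₊²` one has
`E_{(s,t)} ≤ E_{(s+s₀,t+t₀)}`, i.e. the larger projection fixes the range of the smaller. -/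
theorem Eproj_increasing
    {K : Type*} [NormedAddCommGroup K] [InnerProductSpace ℂ K] [CompleteSpace K]
    [SecondCountableTopology K]
    (Pm Qn : ℕ → K →L[ℂ] K)
    (hPP : ∀ i j, 1 ≤ i → 1 ≤ j → Pm i ∘L Pm j = if i = j then Pm i else 0)
    (hQQ : ∀ i j, 1 ≤ i → 1 ≤ j → Qn i ∘L Qn j = if i = j then Qn i else 0)
    (hPsa : ∀ i, 1 ≤ i → IsSelfAdjoint (Pm i))
    (hQsa : ∀ i, 1 ≤ i → IsSelfAdjoint (Qn i))
    (a b c d : ℝ) (ha : a ∈ Set.Ioo (0 : ℝ) 1) (hb : b ∈ Set.Ioo (0 : ℝ) 1)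
    (hc : c ∈ Set.Ioo (0 : ℝ) 1) (hd : d ∈ Set.Ioo (0 : ℝ) 1) (hab : a < b) (hcd : c < d)
    -- `e S = 1_S(z₀)` for a character `z₀` of `L^∞([0,1]², λ)`
    (e : Set (ℝ × ℝ) → ℂ)
    (he01 : ∀ S : Set (ℝ × ℝ), e S = 0 ∨ e S = 1)
    (heuniv : e Set.univ = 1)
    (hemul : ∀ S T : Set (ℝ × ℝ), MeasurableSet S → MeasurableSet T →
      e (S ∩ T) = e S * e T)
    (headd : ∀ S T : Set (ℝ × ℝ), MeasurableSet S → MeasurableSet T →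
      (volume.restrict (Set.Icc (0 : ℝ) 1 ×ˢ Set.Icc (0 : ℝ) 1)) (S ∩ T) = 0 →
      e (S ∪ T) = e S + e T)
    (henull : ∀ S : Set (ℝ × ℝ), MeasurableSet S →
      (volume.restrict (Set.Icc (0 : ℝ) 1 ×ˢ Set.Icc (0 : ℝ) 1)) S = 0 → e S = 0)
    (hz₀ : e (Set.Icc a b ×ˢ Set.Icc c d) ≠ 0) :
    ∀ s t s₀ t₀ : ℝ, 0 ≤ s → 0 ≤ t → 0 ≤ s₀ → 0 ≤ t₀ →
      ∀ ξ : K, Eproj Pm Qn e (s + s₀, t + t₀) (Eproj Pm Qn e (s, t) ξ) =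
        Eproj Pm Qn e (s, t) ξ := by
  have hB : MeasurableSet (Set.Icc (0:ℝ) 1 ×ˢ Set.Icc (0:ℝ) 1) :=
    measurableSet_Icc.prod measurableSet_Icc
  -- `e` of the unit square is 1
  have esq : e (Set.Icc (0:ℝ) 1 ×ˢ Set.Icc (0:ℝ) 1) = 1 := by
    have hcompl : e (Set.Icc (0:ℝ) 1 ×ˢ Set.Icc (0:ℝ) 1)ᶜ = 0 := by
      apply henull _ hB.compl
      rw [Measure.restrict_apply hB.compl]
      simp
    have hu := headd _ _ hB hB.compl (by simp)
    rw [Set.union_compl_self, heuniv, hcompl, add_zero] at hu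
    exact hu.symm
  -- `e` is monotone on measurable sets (for value 1)
  have emono : ∀ S T : Set (ℝ × ℝ), MeasurableSet S → MeasurableSet T → T ⊆ S →
      e T = 1 → e S = 1 := by
    intro S T hS hT hTS hT1
    have h := hemul S T hS hT
    rw [Set.inter_eq_self_of_subset_right hTS, hT1, mul_one] at h
    exact h.symm
  -- vertical and horizontal lines are null for the restricted measure
  have vnull : ∀ u : ℝ, (volume.restrict (Set.Icc (0:ℝ) 1 ×ˢ Set.Icc (0:ℝ) 1))
      ((Set.Icc u u) ×ˢ Set.Icc (0:ℝ) 1) = 0 := by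
    intro u
    have h0 : (volume : Measure (ℝ×ℝ)) ((Set.Icc u u) ×ˢ Set.Icc (0:ℝ) 1) = 0 := by
      rw [Measure.volume_eq_prod, Measure.prod_prod]; simp
    exact le_zero_iff.mp ((Measure.restrict_apply_le _ _).trans h0.le)
  have hnull : ∀ v : ℝ, (volume.restrict (Set.Icc (0:ℝ) 1 ×ˢ Set.Icc (0:ℝ) 1))
      (Set.Icc (0:ℝ) 1 ×ˢ (Set.Icc v v)) = 0 := by
    intro v
    have h0 : (volume : Measure (ℝ×ℝ)) (Set.Icc (0:ℝ) 1 ×ˢ (Set.Icc v v)) = 0 := by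
      rw [Measure.volume_eq_prod, Measure.prod_prod]; simp
    exact le_zero_iff.mp ((Measure.restrict_apply_le _ _).trans h0.le)
  -- splitting the square into two vertical (resp. horizontal) strips
  have strips_x : ∀ u : ℝ, 0 ≤ u → u ≤ 1 →
      e (Set.Icc 0 u ×ˢ Set.Icc (0:ℝ) 1) + e (Set.Icc u 1 ×ˢ Set.Icc (0:ℝ) 1) = 1 := by
    intro u h0 h1
    have hU : Set.Icc (0:ℝ) u ∪ Set.Icc u 1 = Set.Icc 0 1 := Set.Icc_union_Icc_eq_Icc h0 h1
    have hadd := headd (Set.Icc 0 u ×ˢ Set.Icc (0:ℝ) 1) (Set.Icc u 1 ×ˢ Set.Icc (0:ℝ) 1)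
      (measurableSet_Icc.prod measurableSet_Icc) (measurableSet_Icc.prod measurableSet_Icc) ?_
    · rw [← Set.union_prod, hU, esq] at hadd
      exact hadd.symm
    · refine measure_mono_null ?_ (vnull u)
      rw [Set.prod_inter_prod]
      refine Set.prod_mono ?_ Set.inter_subset_left
      rw [Set.Icc_inter_Icc, max_eq_right h0, min_eq_left h1]
  have strips_y : ∀ v : ℝ, 0 ≤ v → v ≤ 1 →
      e (Set.Icc (0:ℝ) 1 ×ˢ Set.Icc 0 v) + e (Set.Icc (0:ℝ) 1 ×ˢ Set.Icc v 1) = 1 := by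
    intro v h0 h1
    have hU : Set.Icc (0:ℝ) v ∪ Set.Icc v 1 = Set.Icc 0 1 := Set.Icc_union_Icc_eq_Icc h0 h1
    have hadd := headd (Set.Icc (0:ℝ) 1 ×ˢ Set.Icc 0 v) (Set.Icc (0:ℝ) 1 ×ˢ Set.Icc v 1)
      (measurableSet_Icc.prod measurableSet_Icc) (measurableSet_Icc.prod measurableSet_Icc) ?_
    · rw [← Set.prod_union, hU, esq] at hadd
      exact hadd.symm
    · refine measure_mono_null ?_ (hnull v)
      rw [Set.prod_inter_prod]
      refine Set.prod_mono Set.inter_subset_left ?_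
      rw [Set.Icc_inter_Icc, max_eq_right h0, min_eq_left h1]
  -- factorization of `e` on products of subintervals of [0,1]
  have fact : ∀ A B : Set ℝ, A ⊆ Set.Icc 0 1 → B ⊆ Set.Icc 0 1 →
      MeasurableSet A → MeasurableSet B →
      e (A ×ˢ B) = e (A ×ˢ Set.Icc (0:ℝ) 1) * e (Set.Icc (0:ℝ) 1 ×ˢ B) := by
    intro A B hA hBs mA mB
    have h := hemul (A ×ˢ Set.Icc (0:ℝ) 1) (Set.Icc (0:ℝ) 1 ×ˢ B)
      (mA.prod measurableSet_Icc) (measurableSet_Icc.prod mB)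
    rw [Set.prod_inter_prod, Set.inter_eq_left.mpr hA, Set.inter_eq_right.mpr hBs] at h
    exact h
  -- the key evaluation: E(s,t) = F(p,q) for suitable integers p,q
  have keyval : ∀ s t : ℝ, 0 ≤ s → 0 ≤ t → ∃ p q : ℤ,
      (⌊s⌋ ≤ p ∧ p ≤ ⌊s⌋ + 1) ∧ (⌊t⌋ ≤ q ∧ q ≤ ⌊t⌋ + 1) ∧
      (p = ⌊s⌋ ↔ e (Set.Icc 0 ((⌊s⌋:ℝ) + 1 - s) ×ˢ Set.Icc (0:ℝ) 1) = 1) ∧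
      (q = ⌊t⌋ ↔ e (Set.Icc (0:ℝ) 1 ×ˢ Set.Icc 0 ((⌊t⌋:ℝ) + 1 - t)) = 1) ∧
      Eproj Pm Qn e (s, t) = Fproj Pm Qn (p, q) := by
    intro s t hs ht
    set u : ℝ := (⌊s⌋:ℝ) + 1 - s with hud
    set v : ℝ := (⌊t⌋:ℝ) + 1 - t with hvd
    have hu0 : 0 ≤ u := by
      have := Int.lt_floor_add_one s; rw [hud]; linarith
    have hu1 : u ≤ 1 := by
      have := Int.floor_le s; rw [hud]; linarith
    have hv0 : 0 ≤ v := by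
      have := Int.lt_floor_add_one t; rw [hvd]; linarith
    have hv1 : v ≤ 1 := by
      have := Int.floor_le t; rw [hvd]; linarith
    have hxsum := strips_x u hu0 hu1
    have hysum := strips_y v hv0 hv1
    have f00 := fact (Set.Icc 0 u) (Set.Icc 0 v)
      (Set.Icc_subset_Icc le_rfl hu1) (Set.Icc_subset_Icc le_rfl hv1)
      measurableSet_Icc measurableSet_Icc
    have f01 := fact (Set.Icc 0 u) (Set.Icc v 1)
      (Set.Icc_subset_Icc le_rfl hu1) (Set.Icc_subset_Icc hv0 le_rfl)
      measurableSet_Icc measurableSet_Icc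
    have f10 := fact (Set.Icc u 1) (Set.Icc 0 v)
      (Set.Icc_subset_Icc hu0 le_rfl) (Set.Icc_subset_Icc le_rfl hv1)
      measurableSet_Icc measurableSet_Icc
    have f11 := fact (Set.Icc u 1) (Set.Icc v 1)
      (Set.Icc_subset_Icc hu0 le_rfl) (Set.Icc_subset_Icc hv0 le_rfl)
      measurableSet_Icc measurableSet_Icc
    have hE : Eproj Pm Qn e (s, t) =
        (e (Set.Icc 0 u ×ˢ Set.Icc (0:ℝ) 1) * e (Set.Icc (0:ℝ) 1 ×ˢ Set.Icc 0 v))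
          • Fproj Pm Qn (⌊s⌋, ⌊t⌋) +
        (e (Set.Icc 0 u ×ˢ Set.Icc (0:ℝ) 1) * e (Set.Icc (0:ℝ) 1 ×ˢ Set.Icc v 1))
          • Fproj Pm Qn (⌊s⌋, ⌊t⌋ + 1) +
        (e (Set.Icc u 1 ×ˢ Set.Icc (0:ℝ) 1) * e (Set.Icc (0:ℝ) 1 ×ˢ Set.Icc 0 v))
          • Fproj Pm Qn (⌊s⌋ + 1, ⌊t⌋) +
        (e (Set.Icc u 1 ×ˢ Set.Icc (0:ℝ) 1) * e (Set.Icc (0:ℝ) 1 ×ˢ Set.Icc v 1))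
          • Fproj Pm Qn (⌊s⌋ + 1, ⌊t⌋ + 1) := by
      rw [← f00, ← f01, ← f10, ← f11]
      simp only [Eproj]
      rw [if_pos (show (0:ℝ) ≤ (s, t).1 ∧ (0:ℝ) ≤ (s, t).2 from ⟨hs, ht⟩)]
    by_cases hex : e (Set.Icc 0 u ×ˢ Set.Icc (0:ℝ) 1) = 1 <;>
      by_cases hey : e (Set.Icc (0:ℝ) 1 ×ˢ Set.Icc 0 v) = 1
    · have hex' : e (Set.Icc u 1 ×ˢ Set.Icc (0:ℝ) 1) = 0 := by
        linear_combination hxsum - hex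
      have hey' : e (Set.Icc (0:ℝ) 1 ×ˢ Set.Icc v 1) = 0 := by
        linear_combination hysum - hey
      refine ⟨⌊s⌋, ⌊t⌋, ⟨le_rfl, by omega⟩, ⟨le_rfl, by omega⟩,
        iff_of_true rfl hex, iff_of_true rfl hey, ?_⟩
      rw [hE, hex, hey, hex', hey']
      simp
    · have hey0 : e (Set.Icc (0:ℝ) 1 ×ˢ Set.Icc 0 v) = 0 := (he01 _).resolve_right hey
      have hey' : e (Set.Icc (0:ℝ) 1 ×ˢ Set.Icc v 1) = 1 := by
        linear_combination hysum - hey0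
      have hex' : e (Set.Icc u 1 ×ˢ Set.Icc (0:ℝ) 1) = 0 := by
        linear_combination hxsum - hex
      refine ⟨⌊s⌋, ⌊t⌋ + 1, ⟨le_rfl, by omega⟩, ⟨by omega, le_rfl⟩,
        iff_of_true rfl hex, iff_of_false (by omega) hey, ?_⟩
      rw [hE, hex, hey0, hex', hey']
      simp
    · have hex0 : e (Set.Icc 0 u ×ˢ Set.Icc (0:ℝ) 1) = 0 := (he01 _).resolve_right hex
      have hex' : e (Set.Icc u 1 ×ˢ Set.Icc (0:ℝ) 1) = 1 := by
        linear_combination hxsum - hex0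
      have hey' : e (Set.Icc (0:ℝ) 1 ×ˢ Set.Icc v 1) = 0 := by
        linear_combination hysum - hey
      refine ⟨⌊s⌋ + 1, ⌊t⌋, ⟨by omega, le_rfl⟩, ⟨le_rfl, by omega⟩,
        iff_of_false (by omega) hex, iff_of_true rfl hey, ?_⟩
      rw [hE, hex0, hey, hex', hey']
      simp
    · have hex0 : e (Set.Icc 0 u ×ˢ Set.Icc (0:ℝ) 1) = 0 := (he01 _).resolve_right hex
      have hey0 : e (Set.Icc (0:ℝ) 1 ×ˢ Set.Icc 0 v) = 0 := (he01 _).resolve_right hey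
      have hex' : e (Set.Icc u 1 ×ˢ Set.Icc (0:ℝ) 1) = 1 := by
        linear_combination hxsum - hex0
      have hey' : e (Set.Icc (0:ℝ) 1 ×ˢ Set.Icc v 1) = 1 := by
        linear_combination hysum - hey0
      refine ⟨⌊s⌋ + 1, ⌊t⌋ + 1, ⟨by omega, le_rfl⟩, ⟨by omega, le_rfl⟩,
        iff_of_false (by omega) hex, iff_of_false (by omega) hey, ?_⟩
      rw [hE, hex0, hey0, hex', hey']
      simp
  -- main argument
  intro s t s₀ t₀ hs ht hs₀ ht₀ ξ
  obtain ⟨p, q, hpb, hqb, hpe, hqe, hEst⟩ := keyval s t hs ht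
  obtain ⟨p', q', hpb', hqb', hpe', hqe', hEst'⟩ :=
    keyval (s + s₀) (t + t₀) (by linarith) (by linarith)
  have hfs : ⌊s⌋ ≤ ⌊s + s₀⌋ := Int.floor_le_floor (by linarith)
  have hft : ⌊t⌋ ≤ ⌊t + t₀⌋ := Int.floor_le_floor (by linarith)
  have hp0 : 0 ≤ p := le_trans (Int.floor_nonneg.mpr hs) hpb.1
  have hq0 : 0 ≤ q := le_trans (Int.floor_nonneg.mpr ht) hqb.1
  -- p ≤ p'
  have hpp' : p ≤ p' := by
    rcases lt_or_eq_of_le hfs with hlt | heq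
    · omega
    · rcases (by omega : p' = ⌊s + s₀⌋ ∨ p' = ⌊s + s₀⌋ + 1) with h | h
      · have h1 : e (Set.Icc 0 ((⌊s + s₀⌋:ℝ) + 1 - (s + s₀)) ×ˢ Set.Icc (0:ℝ) 1) = 1 :=
          hpe'.mp h
        have hsub : Set.Icc (0:ℝ) ((⌊s + s₀⌋:ℝ) + 1 - (s + s₀)) ×ˢ Set.Icc (0:ℝ) 1 ⊆
            Set.Icc (0:ℝ) ((⌊s⌋:ℝ) + 1 - s) ×ˢ Set.Icc (0:ℝ) 1 := by
          refine Set.prod_mono (Set.Icc_subset_Icc le_rfl ?_) le_rfl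
          rw [← heq]; linarith
        have h2 := emono _ _ (measurableSet_Icc.prod measurableSet_Icc)
          (measurableSet_Icc.prod measurableSet_Icc) hsub h1
        have := hpe.mpr h2
        omega
      · omega
  have hqq' : q ≤ q' := by
    rcases lt_or_eq_of_le hft with hlt | heq
    · omega
    · rcases (by omega : q' = ⌊t + t₀⌋ ∨ q' = ⌊t + t₀⌋ + 1) with h | h
      · have h1 : e (Set.Icc (0:ℝ) 1 ×ˢ Set.Icc 0 ((⌊t + t₀⌋:ℝ) + 1 - (t + t₀))) = 1 :=
          hqe'.mp h
        have hsub : Set.Icc (0:ℝ) 1 ×ˢ Set.Icc (0:ℝ) ((⌊t + t₀⌋:ℝ) + 1 - (t + t₀)) ⊆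
            Set.Icc (0:ℝ) 1 ×ˢ Set.Icc (0:ℝ) ((⌊t⌋:ℝ) + 1 - t) := by
          refine Set.prod_mono le_rfl (Set.Icc_subset_Icc le_rfl ?_)
          rw [← heq]; linarith
        have h2 := emono _ _ (measurableSet_Icc.prod measurableSet_Icc)
          (measurableSet_Icc.prod measurableSet_Icc) hsub h1
        have := hqe.mpr h2
        omega
      · omega
  rw [hEst, hEst', ← ContinuousLinearMap.comp_apply,
    Fcomp Pm Qn hPP hQQ hp0 hq0 hpp' hqq']

end
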